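/- For a partially ordered group (G,P) the following statements are equivalent: (i) (G,P) is quasi-lattice ordered, i.e. every pair x, y ∈ G with a common upper bound in G has a least upper bound; (ii) every finite subset of G with a common upper bound in P has a least upper bound in P; (iii) every element x of G having an upper bound in P has a least upper bound in P; (iv) for every x ∈ PP⁻¹ there exists a pair a, b ∈ P with x = ab⁻¹ such that for every u, v ∈ P with x = uv⁻¹ one has a ≤ u and b ≤ v; (v) every pair u, v ∈ P has a greatest lower bound u ∧ᵣ v in G with respect to the right-invariant partial order; (vi) for every x ∈ PP⁻¹ there exists a pair a, b ∈ P with x = ab⁻¹ and a ∧ᵣ b = 1. -/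
import Mathlib


section Order

variable {H : Type*} [Group H]

/-- `x ≤ y` in the left-invariant partial order determined by the cone `P`. -/
def lle (P : Submonoid H) (x y : H) : Prop := x⁻¹ * y ∈ P

/-- `x ≤ᵣ y` in the right-invariant partial order determined by the cone `P`. -/
def rle (P : Submonoid H) (x y : H) : Prop := y * x⁻¹ ∈ P

/-- `x` and `y` have a common upper bound for the left-invariant order. -/
def HasUB (P : Submonoid H) (x y : H) : Prop := ∃ z, lle P x z ∧ lle P y z

/-- `m` is a least upper bound of `x` and `y` for the left-invariant order. -/
def IsLub' (P : Submonoid H) (x y m : H) : Prop :=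
  lle P x m ∧ lle P y m ∧ ∀ w, lle P x w → lle P y w → lle P m w

/-- `w` is a greatest lower bound of `u` and `v` for the right-invariant order
(greatest among *all* common right lower bounds in the group). -/
def IsRGlb (P : Submonoid H) (u v w : H) : Prop :=
  rle P w u ∧ rle P w v ∧ ∀ z, rle P z u → rle P z v → rle P z w

/-- `(H,P)` is a partially ordered group: `P ∩ P⁻¹ = {1}`. -/
def IsPoGroup (P : Submonoid H) : Prop := ∀ x : H, x ∈ P → x⁻¹ ∈ P → x = 1

/-- `(H,P)` is a quasi-lattice ordered group: it is a partially ordered group in which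
every pair of elements with a common upper bound has a least upper bound. -/
def IsQLO (P : Submonoid H) : Prop :=
  IsPoGroup P ∧ ∀ x y : H, HasUB P x y → ∃ m, IsLub' P x y m

end Order

/-- Lemma 3.2. For a partially ordered group `(H,P)` the following are
equivalent: (i) `(H,P)` is quasi-lattice ordered; (ii) every finite subset of `H` with a
common upper bound in `P` has a least upper bound in `P`; (iii) every element of `H` with
an upper bound in `P` has a least upper bound in `P`; (iv) every `x ∈ PP⁻¹` can be
written `x = ab⁻¹` with `a, b ∈ P` minimal, i.e. `a ≤ u` and `b ≤ v` whenever
`x = uv⁻¹` with `u, v ∈ P`; (v) every pair of elements of `P` has a greatest lower bound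
for the right-invariant order; (vi) every `x ∈ PP⁻¹` can be written `x = ab⁻¹` with
`a, b ∈ P` and `a ∧ᵣ b = 1`. -/
theorem quasiLattice_tfae {H : Type*} [Group H] (P : Submonoid H)
    (hpo : IsPoGroup P) :
    [ (∀ x y : H, HasUB P x y → ∃ m, IsLub' P x y m),
      (∀ F : Finset H, (∃ p ∈ P, ∀ x ∈ F, lle P x p) →
        ∃ m ∈ P, (∀ x ∈ F, lle P x m) ∧ ∀ w ∈ P, (∀ x ∈ F, lle P x w) → lle P m w),
      (∀ x : H, (∃ p ∈ P, lle P x p) →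
        ∃ m ∈ P, lle P x m ∧ ∀ w ∈ P, lle P x w → lle P m w),
      (∀ x : H, (∃ u ∈ P, ∃ v ∈ P, x = u * v⁻¹) →
        ∃ a ∈ P, ∃ b ∈ P, x = a * b⁻¹ ∧
          ∀ u v : H, u ∈ P → v ∈ P → x = u * v⁻¹ → lle P a u ∧ lle P b v),
      (∀ u v : H, u ∈ P → v ∈ P → ∃ w, IsRGlb P u v w),
      (∀ x : H, (∃ u ∈ P, ∃ v ∈ P, x = u * v⁻¹) →
        ∃ a ∈ P, ∃ b ∈ P, x = a * b⁻¹ ∧ IsRGlb P a b 1) ].TFAE := by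
  classical
  have lle_trans : ∀ x y z : H, lle P x y → lle P y z → lle P x z := by
    intro x y z h1 h2
    have := P.mul_mem h1 h2
    simpa [lle, mul_assoc] using this
  tfae_have 1 → 2 := by
    intro h1 F
    induction F using Finset.induction_on with
    | empty =>
      intro _
      refine ⟨1, P.one_mem, by simp, fun w hw _ => ?_⟩
      simpa [lle] using hw
    | @insert x F hxF ih =>
      rintro ⟨p, hp, hub⟩
      obtain ⟨m, hmP, hmub, hmmin⟩ :=
        ih ⟨p, hp, fun y hy => hub y (Finset.mem_insert_of_mem hy)⟩
      obtain ⟨m', hxm', hmm', hmin'⟩ :=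
        h1 x m ⟨p, hub x (Finset.mem_insert_self x F),
          hmmin p hp fun y hy => hub y (Finset.mem_insert_of_mem hy)⟩
      refine ⟨m', ?_, ?_, ?_⟩
      · have : lle P 1 m' := lle_trans 1 m m' (by simpa [lle] using hmP) hmm'
        simpa [lle] using this
      · intro y hy
        rcases Finset.mem_insert.mp hy with rfl | hy
        · exact hxm'
        · exact lle_trans y m m' (hmub y hy) hmm'
      · intro w hwP hw
        exact hmin' w (hw x (Finset.mem_insert_self x F))
          (hmmin w hwP fun y hy => hw y (Finset.mem_insert_of_mem hy))
  tfae_have 2 → 3 := by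
    intro h2 x ⟨p, hp, hxp⟩
    obtain ⟨m, hmP, hub, hmin⟩ := h2 {x} ⟨p, hp, by simpa using hxp⟩
    exact ⟨m, hmP, hub x (Finset.mem_singleton_self x),
      fun w hwP hw => hmin w hwP (by simpa using hw)⟩
  tfae_have 3 → 4 := by
    rintro h3 x ⟨u, hu, v, hv, rfl⟩
    have hxu : lle P (u * v⁻¹) u := by
      show (u * v⁻¹)⁻¹ * u ∈ P
      have h : (u * v⁻¹)⁻¹ * u = v := by group
      rw [h]; exact hv
    obtain ⟨m, hmP, hxm, hmin⟩ := h3 (u * v⁻¹) ⟨u, hu, hxu⟩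
    have hbP : (u * v⁻¹)⁻¹ * m ∈ P := hxm
    refine ⟨m, hmP, (u * v⁻¹)⁻¹ * m, hbP, by group, ?_⟩
    intro u' v' hu' hv' hxe
    have h1 : lle P (u * v⁻¹) u' := by
      show (u * v⁻¹)⁻¹ * u' ∈ P
      have h : (u * v⁻¹)⁻¹ * u' = v' := by
        have := hxe
        rw [mul_inv_rev, inv_inv]
        rw [show u' = (u * v⁻¹) * v' by rw [hxe]; group]
        group
      rw [h]; exact hv'
    have h2 := hmin u' hu' h1
    refine ⟨h2, ?_⟩
    show ((u * v⁻¹)⁻¹ * m)⁻¹ * v' ∈ P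
    have h : ((u * v⁻¹)⁻¹ * m)⁻¹ * v' = m⁻¹ * u' := by
      rw [show u' = (u * v⁻¹) * v' by rw [hxe]; group]
      group
    rw [h]; exact h2
  tfae_have 4 → 6 := by
    intro h4 x hx
    obtain ⟨a, ha, b, hb, hxe, hmin⟩ := h4 x hx
    refine ⟨a, ha, b, hb, hxe, ?_, ?_, ?_⟩
    · show a * 1⁻¹ ∈ P; simpa using ha
    · show b * 1⁻¹ ∈ P; simpa using hb
    · intro z hza hzb
      have hh := hmin (a * z⁻¹) (b * z⁻¹) hza hzb (by rw [hxe]; group)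
      have h1 : a⁻¹ * (a * z⁻¹) ∈ P := hh.1
      have h : a⁻¹ * (a * z⁻¹) = z⁻¹ := by group
      rw [h] at h1
      show 1 * z⁻¹ ∈ P
      simpa using h1
  tfae_have 6 → 5 := by
    intro h6 u v hu hv
    obtain ⟨a, ha, b, hb, hxe, _, _, hglb⟩ := h6 (u * v⁻¹) ⟨u, hu, v, hv, rfl⟩
    have h2 : v * u⁻¹ = b * a⁻¹ := by
      have := congrArg Inv.inv hxe
      simpa [mul_inv_rev] using this
    refine ⟨a⁻¹ * u, ?_, ?_, ?_⟩
    · show u * (a⁻¹ * u)⁻¹ ∈ P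
      have h : u * (a⁻¹ * u)⁻¹ = a := by group
      rw [h]; exact ha
    · show v * (a⁻¹ * u)⁻¹ ∈ P
      have h : v * (a⁻¹ * u)⁻¹ = b := by
        rw [mul_inv_rev, inv_inv, ← mul_assoc, h2]; group
      rw [h]; exact hb
    · intro z hzu hzv
      have hz1 : a * (a⁻¹ * u * z⁻¹)⁻¹⁻¹ ∈ P := by
        have h : a * (a⁻¹ * u * z⁻¹)⁻¹⁻¹ = u * z⁻¹ := by group
        rw [h]; exact hzu
      have hz2 : b * (a⁻¹ * u * z⁻¹)⁻¹⁻¹ ∈ P := by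
        have h : b * (a⁻¹ * u * z⁻¹)⁻¹⁻¹ = (b * a⁻¹) * (u * z⁻¹) := by group
        rw [h, ← h2]
        have h' : v * u⁻¹ * (u * z⁻¹) = v * z⁻¹ := by group
        rw [h']; exact hzv
      have := hglb (a⁻¹ * u * z⁻¹)⁻¹ hz1 hz2
      have h1 : 1 * (a⁻¹ * u * z⁻¹)⁻¹⁻¹ ∈ P := this
      show (a⁻¹ * u) * z⁻¹ ∈ P
      have h : 1 * (a⁻¹ * u * z⁻¹)⁻¹⁻¹ = (a⁻¹ * u) * z⁻¹ := by group
      rwa [h] at h1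
  tfae_have 5 → 1 := by
    rintro h5 x y ⟨z, hxz, hyz⟩
    obtain ⟨w, hwu, hwv, hmin⟩ := h5 (x⁻¹ * z) (y⁻¹ * z) hxz hyz
    refine ⟨z * w⁻¹, ?_, ?_, ?_⟩
    · show x⁻¹ * (z * w⁻¹) ∈ P
      have h : x⁻¹ * (z * w⁻¹) = (x⁻¹ * z) * w⁻¹ := by group
      rw [h]; exact hwu
    · show y⁻¹ * (z * w⁻¹) ∈ P
      have h : y⁻¹ * (z * w⁻¹) = (y⁻¹ * z) * w⁻¹ := by group
      rw [h]; exact hwv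
    · intro w' hxw' hyw'
      have h1 : (x⁻¹ * z) * (w'⁻¹ * z)⁻¹ ∈ P := by
        have h : (x⁻¹ * z) * (w'⁻¹ * z)⁻¹ = x⁻¹ * w' := by group
        rw [h]; exact hxw'
      have h2 : (y⁻¹ * z) * (w'⁻¹ * z)⁻¹ ∈ P := by
        have h : (y⁻¹ * z) * (w'⁻¹ * z)⁻¹ = y⁻¹ * w' := by group
        rw [h]; exact hyw'
      have h3 := hmin (w'⁻¹ * z) h1 h2
      show (z * w⁻¹)⁻¹ * w' ∈ P
      have h : (z * w⁻¹)⁻¹ * w' = w * (w'⁻¹ * z)⁻¹ := by group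
      rw [h]; exact h3
  tfae_finish
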